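/- Let V be a finite set, Q : V → V → ℤ symmetric, K : V → ℤ, E ⊆ V and v ∈ E. Define K+2v* : V → ℤ by (K+2v*)(w) = K(w) + 2Q(v,w). Then B_v(K,E) := min { f(K,I) : v ∈ I ⊆ E } satisfies B_v(K,E) = f(K,{v}) + g(K+2v*, E∖{v}), where f(K,I) = (Σ_{w∈I} K(w) + Q(1_I,1_I))/2 and g(K',E') = min_{I⊆E'} f(K',I). In particular B_v(K,E) = (K(v)+Q(v,v))/2 + g(K+2v*, E∖{v}). -/

import Mathlib

private lemma aux_add_inf' {α : Type*} (T : Finset α) (hT : T.Nonempty)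
    (c : ℚ) (g : α → ℚ) : T.inf' hT (fun I => c + g I) = c + T.inf' hT g := by
  apply le_antisymm
  · obtain ⟨b, hb, hbeq⟩ := Finset.exists_mem_eq_inf' hT g
    rw [hbeq]
    exact Finset.inf'_le _ hb
  · exact Finset.le_inf' _ _ fun b hb => add_le_add_right (Finset.inf'_le _ hb) c

/-- `B_v(K,E) = f(K,{v}) + g(K + 2v^*, E∖{v})`, where `(K+2v^*)(w) = K(w) + 2Q(v,w)`,
`f(K,I) = (∑_{w∈I} K w + Q(1_I,1_I))/2` and `g(K',E') = min_{I⊆E'} f(K',I)`.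
In particular `B_v(K,E) = (K(v)+Q(v,v))/2 + g(K+2v^*, E∖{v})`. -/
theorem stmt_5 (V : Type*) [DecidableEq V]
    (Q : V → V → ℤ) (hsym : ∀ v w, Q v w = Q w v)
    (K : V → ℤ) (E : Finset V) (v : V) (hv : v ∈ E) :
    let f : (V → ℤ) → Finset V → ℚ := fun K' I =>
      (((∑ w ∈ I, K' w : ℤ) : ℚ) + ((∑ w ∈ I, ∑ u ∈ I, Q w u : ℤ) : ℚ)) / 2
    let K2 : V → ℤ := fun w => K w + 2 * Q v w
    (E.powerset.filter (fun I => v ∈ I)).inf'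
        ⟨E, Finset.mem_filter.mpr ⟨Finset.mem_powerset_self E, hv⟩⟩ (f K)
      = f K {v}
        + (E.erase v).powerset.inf' ⟨∅, Finset.empty_mem_powerset _⟩ (f K2)
      ∧ f K {v} = ((K v + Q v v : ℤ) : ℚ) / 2 := by
  intro f K2
  have hfv : f K {v} = ((K v + Q v v : ℤ) : ℚ) / 2 := by
    simp [f]
  refine ⟨?_, hfv⟩
  have hS : E.powerset.filter (fun I => v ∈ I)
      = (E.erase v).powerset.image (insert v) := by
    ext I
    simp only [Finset.mem_filter, Finset.mem_powerset, Finset.mem_image,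
      Finset.subset_erase]
    constructor
    · rintro ⟨hIE, hvI⟩
      exact ⟨I.erase v, ⟨(Finset.erase_subset _ _).trans hIE, Finset.notMem_erase _ _⟩,
        Finset.insert_erase hvI⟩
    · rintro ⟨J, ⟨hJ, hvJ⟩, rfl⟩
      exact ⟨Finset.insert_subset hv hJ, Finset.mem_insert_self _ _⟩
  have hne : (E.erase v).powerset.Nonempty := ⟨∅, Finset.empty_mem_powerset _⟩
  refine (Finset.inf'_congr _ hS (fun _ _ => rfl)).trans ?_
  rw [Finset.inf'_image]
  have hpt : ∀ I ∈ (E.erase v).powerset,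
      (f K ∘ insert v) I = f K {v} + f K2 I := by
    intro I hI
    have hvI : v ∉ I := fun h =>
      Finset.notMem_erase v E ((Finset.mem_powerset.mp hI) h)
    have h1 : ∑ w ∈ insert v I, K w = K v + ∑ w ∈ I, K w :=
      Finset.sum_insert hvI
    have h2 : ∑ w ∈ insert v I, ∑ u ∈ insert v I, Q w u
        = Q v v + 2 * ∑ u ∈ I, Q v u + ∑ w ∈ I, ∑ u ∈ I, Q w u := by
      rw [Finset.sum_insert hvI, Finset.sum_insert hvI]
      have : ∀ w ∈ I, ∑ u ∈ insert v I, Q w u = Q v w + ∑ u ∈ I, Q w u := by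
        intro w hw
        rw [Finset.sum_insert hvI, hsym w v]
      rw [Finset.sum_congr rfl this, Finset.sum_add_distrib]
      ring
    simp only [Function.comp, f, K2, h1, h2, Finset.sum_singleton,
      Finset.sum_add_distrib, Finset.mul_sum]
    push_cast
    ring
  rw [Finset.inf'_congr hne rfl hpt, aux_add_inf']
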